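/- arXiv:1802.02982 — 2 statements merged into one kernel-verified Lean document; each statement's English description precedes it below -/
import Mathlib

section
/- Let G be a simple 3-regular graph with girth at least 5 and let xy be an edge of G with κ_{1/4}(x,y) = 0 (equivalently W_1(μ_x^{1/4}, μ_y^{1/4}) = 1). Then the edge xy lies on a 5-cycle, and moreover there exist two 5-cycles P_1 and P_2 through the edge xy whose vertex sets intersect exactly in {x, y}. -/
open scoped ENNReal

namespace RicciFlatCubic

variable {V : Type*}

/-- The probability measure `μ_x^p` on the vertex set: mass `p` at `x`,
mass `(1-p)/deg x` at each neighbor of `x`, and `0` elsewhere. -/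
noncomputable def muMeasure (G : SimpleGraph V) [G.LocallyFinite] (p : ℝ≥0∞) (x : V) :
    V → ℝ≥0∞ := fun z =>
  haveI : DecidableEq V := Classical.decEq V
  haveI : Decidable (G.Adj x z) := Classical.dec _
  if z = x then p
  else if G.Adj x z then (1 - p) / (G.degree x : ℝ≥0∞)
  else 0

/-- `π : V × V → [0,1]` is a transport plan from `μ₁` to `μ₂` if its marginals are `μ₁`, `μ₂`. -/
def IsTransportPlan (μ₁ μ₂ : V → ℝ≥0∞) (π : V → V → ℝ≥0∞) : Prop :=
  (∀ u v, π u v ≤ 1) ∧ (∀ u, ∑' v, π u v = μ₁ u) ∧ (∀ v, ∑' u, π u v = μ₂ v)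

/-- The Wasserstein distance `W₁(μ₁, μ₂)`: the infimum over all transport plans of the
transport cost `∑ d(u,v) π(u,v)`, where `d` is the shortest-path distance in `G`. -/
noncomputable def W1 (G : SimpleGraph V) (μ₁ μ₂ : V → ℝ≥0∞) : ℝ≥0∞ :=
  ⨅ π : {π : V → V → ℝ≥0∞ // IsTransportPlan μ₁ μ₂ π},
    ∑' q : V × V, (G.dist q.1 q.2 : ℝ≥0∞) * π.1 q.1 q.2

/-- The `p`-Ollivier-Ricci curvature `κ_p(x,y) = 1 - W₁(μ_x^p, μ_y^p)` (as a real number),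
for a real idleness parameter `p`. -/
noncomputable def kappa (G : SimpleGraph V) [G.LocallyFinite] (p : ℝ) (x y : V) : ℝ :=
  1 - (W1 G (muMeasure G (ENNReal.ofReal p) x) (muMeasure G (ENNReal.ofReal p) y)).toReal

/-- The edge `xy` lies on two 5-cycles whose vertex sets intersect exactly in `{x, y}`. -/
def TwoPentagons (G : SimpleGraph V) (x y : V) : Prop :=
  ∃ P₁ P₂ : G.Walk x x, P₁.IsCycle ∧ P₂.IsCycle ∧ P₁.length = 5 ∧ P₂.length = 5 ∧
    s(x, y) ∈ P₁.edges ∧ s(x, y) ∈ P₂.edges ∧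
    {v | v ∈ P₁.support} ∩ {v | v ∈ P₂.support} = {x, y}

/-- The Petersen graph as the Kneser graph `K(5,2)`. -/
def petersen : SimpleGraph {s : Finset (Fin 5) // s.card = 2} where
  Adj a b := Disjoint a.1 b.1
  symm := ⟨fun _ _ h => h.symm⟩
  loopless := ⟨by
    rintro ⟨s, hs⟩ (h : Disjoint s s)
    rw [disjoint_self] at h
    simp only [Finset.bot_eq_empty] at h
    simp [h] at hs⟩

/-- The Triplex: a 12-cycle on `ℤ/12ℤ` together with six chords. -/
def triplex : SimpleGraph (ZMod 12) :=
  SimpleGraph.fromRel fun i j =>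
    j = i + 1 ∨ (i = 1 ∧ j = 7) ∨ (i = 2 ∧ j = 10) ∨ (i = 3 ∧ j = 8) ∨
      (i = 4 ∧ j = 12) ∨ (i = 5 ∧ j = 9) ∨ (i = 6 ∧ j = 11)

/-- The dodecahedral graph: layer `0` is the outer 5-cycle `a`, layers `1`, `2` form the
middle 10-cycle `b₁ c₁ b₂ c₂ … b₅ c₅`, layer `3` is the inner 5-cycle `d`. -/
def dodecahedral : SimpleGraph (Fin 4 × ZMod 5) :=
  SimpleGraph.fromRel fun p q =>
    (p.1 = 0 ∧ q.1 = 0 ∧ q.2 = p.2 + 1) ∨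
    (p.1 = 0 ∧ q.1 = 1 ∧ q.2 = p.2) ∨
    (p.1 = 1 ∧ q.1 = 2 ∧ q.2 = p.2) ∨
    (p.1 = 2 ∧ q.1 = 1 ∧ q.2 = p.2 + 1) ∨
    (p.1 = 2 ∧ q.1 = 3 ∧ q.2 = p.2) ∨
    (p.1 = 3 ∧ q.1 = 3 ∧ q.2 = p.2 + 1)

/-- The half-dodecahedral graph: inner 5-cycle `y` (`Sum.inl`), outer 10-cycle `x`
(`Sum.inr`), and spokes `yᵢ ~ x_{2i-1}`. -/
def halfDodecahedral : SimpleGraph (ZMod 5 ⊕ ZMod 10) :=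
  SimpleGraph.fromRel fun p q =>
    (∃ i : ZMod 5, p = Sum.inl i ∧ q = Sum.inl (i + 1)) ∨
    (∃ j : ZMod 10, p = Sum.inr j ∧ q = Sum.inr (j + 1)) ∨
    (∃ i : ZMod 5, p = Sum.inl i ∧ q = Sum.inr (2 * (i.val : ZMod 10) - 1))

/-- The two-sided infinite path on `ℤ`. -/
def infinitePath : SimpleGraph ℤ := SimpleGraph.fromRel fun i j => j = i + 1

/-- The cycle `Cₙ` on `ℤ/nℤ`. -/
def cycleZMod (n : ℕ) : SimpleGraph (ZMod n) := SimpleGraph.fromRel fun i j => j = i + 1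

noncomputable instance (v : {s : Finset (Fin 5) // s.card = 2}) :
    Fintype (petersen.neighborSet v) := (Set.toFinite _).fintype

noncomputable instance (v : ZMod 12) : Fintype (triplex.neighborSet v) :=
  (Set.toFinite _).fintype

noncomputable instance (v : Fin 4 × ZMod 5) : Fintype (dodecahedral.neighborSet v) :=
  (Set.toFinite _).fintype


section Aux

variable {G : SimpleGraph V}

lemma no_triangle (h5 : 5 ≤ G.egirth) {a b c : V} (hab : G.Adj a b) (hbc : G.Adj b c)
    (hca : G.Adj c a) : False := by
  have hw : (SimpleGraph.Walk.cons hab (SimpleGraph.Walk.cons hbc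
      (SimpleGraph.Walk.cons hca SimpleGraph.Walk.nil))).IsCycle := by
    simp [SimpleGraph.Walk.isCycle_def, SimpleGraph.Walk.isTrail_def, hab.ne, hbc.ne, hca.ne,
      hab.ne', hbc.ne', hca.ne']
  have := SimpleGraph.le_egirth.mp h5 a _ hw
  norm_num at this

lemma no_square (h5 : 5 ≤ G.egirth) {a b c d : V} (hab : G.Adj a b) (hbc : G.Adj b c)
    (hcd : G.Adj c d) (hda : G.Adj d a) (hac : a ≠ c) (hbd : b ≠ d) : False := by
  have hw : (SimpleGraph.Walk.cons hab (SimpleGraph.Walk.cons hbc (SimpleGraph.Walk.cons hcd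
      (SimpleGraph.Walk.cons hda SimpleGraph.Walk.nil)))).IsCycle := by
    simp [SimpleGraph.Walk.isCycle_def, SimpleGraph.Walk.isTrail_def, hab.ne, hbc.ne, hcd.ne,
      hda.ne, hab.ne', hbc.ne', hcd.ne', hda.ne', hac, hbd, hac.symm, hbd.symm]
  have := SimpleGraph.le_egirth.mp h5 a _ hw
  norm_num at this

lemma two_le_dist {u v : V} (h : u ≠ v) (hnadj : ¬ G.Adj u v) (hr : G.Reachable u v) :
    2 ≤ G.dist u v := by
  have h0 : G.dist u v ≠ 0 := by
    rw [SimpleGraph.dist_ne_zero_iff_ne_and_reachable]; exact ⟨h, hr⟩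
  have h1 : G.dist u v ≠ 1 := fun hc => hnadj (SimpleGraph.dist_eq_one_iff_adj.mp hc)
  omega

lemma exists_mid {u v : V} (h : G.dist u v = 2) (hr : G.Reachable u v) :
    ∃ w, G.Adj u w ∧ G.Adj w v := by
  obtain ⟨p, hp⟩ := hr.exists_walk_length_eq_dist
  rw [h] at hp
  cases p with
  | nil => simp at hp
  | cons h1 q =>
    cases q with
    | nil => simp at hp
    | cons h2 r =>
      cases r with
      | nil => exact ⟨_, h1, h2⟩
      | cons h3 s => simp [SimpleGraph.Walk.length_cons] at hp

lemma pentagon {x x1 w ya y : V} (hxx1 : G.Adj x x1) (h1w : G.Adj x1 w)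
    (hwya : G.Adj w ya) (hyay : G.Adj ya y) (hyx : G.Adj y x)
    (h1 : x ≠ w) (h2 : x ≠ ya) (h3 : x1 ≠ ya) (h4 : x1 ≠ y) (h5 : w ≠ y) :
    ∃ P : G.Walk x x, P.IsCycle ∧ P.length = 5 ∧ s(x,y) ∈ P.edges ∧
      P.support = [x, x1, w, ya, y, x] := by
  refine ⟨SimpleGraph.Walk.cons hxx1 (SimpleGraph.Walk.cons h1w (SimpleGraph.Walk.cons hwya
    (SimpleGraph.Walk.cons hyay (SimpleGraph.Walk.cons hyx SimpleGraph.Walk.nil)))),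
      ?_, ?_, ?_, ?_⟩
  · simp [SimpleGraph.Walk.isCycle_def, SimpleGraph.Walk.isTrail_def,
      hxx1.ne, h1w.ne, hwya.ne, hyay.ne, hyx.ne, hxx1.ne', h1w.ne', hwya.ne', hyay.ne', hyx.ne',
      h1, h2, h3, h4, h5, h1.symm, h2.symm, h3.symm, h4.symm, h5.symm, Sym2.eq_iff]
  · rfl
  · simp [Sym2.eq_iff]
  · rfl

lemma W1_dual_lb (G : SimpleGraph V) (μ₁ μ₂ f g : V → ℝ≥0∞)
    (h : ∀ u v, μ₁ u ≠ 0 → μ₂ v ≠ 0 → f u + g v ≤ (G.dist u v : ℝ≥0∞) + 1) :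
    (∑' u, f u * μ₁ u) + (∑' v, g v * μ₂ v) ≤ W1 G μ₁ μ₂ + ∑' u, μ₁ u := by
  by_cases hne : Nonempty {π : V → V → ℝ≥0∞ // IsTransportPlan μ₁ μ₂ π}
  swap
  · haveI : IsEmpty {π : V → V → ℝ≥0∞ // IsTransportPlan μ₁ μ₂ π} := ⟨fun p => hne ⟨p⟩⟩
    rw [W1, iInf_of_empty]; simp
  rw [W1, ENNReal.iInf_add]
  refine le_iInf fun p => ?_
  obtain ⟨π, hle, h1, h2⟩ := p
  have hrow : ∀ u v, π u v ≤ μ₁ u := fun u v => (h1 u) ▸ ENNReal.le_tsum v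
  have hcol : ∀ u v, π u v ≤ μ₂ v := fun u v => (h2 v) ▸ ENNReal.le_tsum u
  have key : ∀ q : V × V, (f q.1 + g q.2) * π q.1 q.2
      ≤ ((G.dist q.1 q.2 : ℝ≥0∞) + 1) * π q.1 q.2 := by
    rintro ⟨u, v⟩
    by_cases hp : π u v = 0
    · simp [hp]
    · exact mul_le_mul_left (h u v
        (fun h0 => hp (le_antisymm (h0 ▸ hrow u v) (zero_le')))
        (fun h0 => hp (le_antisymm (h0 ▸ hcol u v) (zero_le')))) _
  have LHS : (∑' u, f u * μ₁ u) + (∑' v, g v * μ₂ v)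
      = ∑' q : V × V, (f q.1 + g q.2) * π q.1 q.2 := by
    have e1 : ∑' q : V × V, f q.1 * π q.1 q.2 = ∑' u, f u * μ₁ u := by
      rw [ENNReal.tsum_prod']
      congr 1; ext u
      show (∑' b, f u * π u b) = f u * μ₁ u
      rw [ENNReal.tsum_mul_left, h1 u]
    have e2 : ∑' q : V × V, g q.2 * π q.1 q.2 = ∑' v, g v * μ₂ v := by
      rw [ENNReal.tsum_prod', ENNReal.tsum_comm]
      congr 1; ext v
      show (∑' u, g v * π u v) = g v * μ₂ v
      rw [ENNReal.tsum_mul_left, h2 v]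
    rw [← e1, ← e2, ← ENNReal.tsum_add]
    congr 1; ext q; rw [add_mul]
  have RHS : ∑' q : V × V, ((G.dist q.1 q.2 : ℝ≥0∞) + 1) * π q.1 q.2
      = (∑' q : V × V, (G.dist q.1 q.2 : ℝ≥0∞) * π q.1 q.2) + ∑' u, μ₁ u := by
    have e3 : ∑' q : V × V, π q.1 q.2 = ∑' u, μ₁ u := by
      rw [ENNReal.tsum_prod']
      congr 1; ext u; exact h1 u
    rw [← e3, ← ENNReal.tsum_add]
    congr 1; ext q; rw [add_mul, one_mul]
  rw [LHS]
  exact le_trans (ENNReal.tsum_le_tsum key) RHS.le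

lemma quarter : ((1 : ℝ≥0∞) - 1/4) / ((3 : ℕ):ℝ≥0∞) = 1/4 := by
  have h1 : ((1 : ℝ≥0∞) - 1/4) = 3/4 := by
    rw [ENNReal.sub_eq_of_eq_add (by norm_num)]
    rw [ENNReal.div_add_div_same]
    rw [← ENNReal.toReal_eq_toReal_iff' (by norm_num) (by simp [ENNReal.div_eq_top])]
    norm_num
  rw [h1, ← ENNReal.toReal_eq_toReal_iff' (by simp [ENNReal.div_eq_top]) (by simp [ENNReal.div_eq_top])]
  norm_num

lemma mu_eq (G : SimpleGraph V) [G.LocallyFinite] {x b c d : V}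
    (hdeg : G.degree x = 3) (hN : ∀ z, G.Adj x z ↔ (z = b ∨ z = c ∨ z = d))
    (hxb : x ≠ b) (hxc : x ≠ c) (hxd : x ≠ d) :
    ∀ z, muMeasure G (1/4) x z =
      haveI : DecidableEq V := Classical.decEq V
      if z = x ∨ z = b ∨ z = c ∨ z = d then 1/4 else 0 := by
  classical
  intro z
  by_cases hzx : z = x
  · subst hzx; simp [muMeasure]
  · rw [muMeasure]
    simp only [hzx, if_false, hdeg, false_or]
    by_cases hA : G.Adj x z
    · rw [if_pos hA, if_pos (hN z |>.mp hA), quarter]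
    · rw [if_neg hA, if_neg (fun hc => hA ((hN z).mpr hc))]

lemma tsum_mu_four (G : SimpleGraph V) [G.LocallyFinite] {x b c d : V}
    (hdeg : G.degree x = 3) (hN : ∀ z, G.Adj x z ↔ (z = b ∨ z = c ∨ z = d))
    (hxb : x ≠ b) (hxc : x ≠ c) (hxd : x ≠ d) (hbc : b ≠ c) (hbd : b ≠ d) (hcd : c ≠ d)
    (F : V → ℝ≥0∞) :
    ∑' u, F u * muMeasure G (1/4) x u = (F x + F b + F c + F d) / 4 := by
  classical
  have hval := mu_eq G hdeg hN hxb hxc hxd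
  have hs : ∑' u, F u * muMeasure G (1/4) x u
      = ∑ u ∈ ({x, b, c, d} : Finset V), F u * muMeasure G (1/4) x u := by
    refine tsum_eq_sum ?_
    intro u hu
    simp only [Finset.mem_insert, Finset.mem_singleton, not_or] at hu
    rw [hval u, if_neg (by tauto)]
    exact mul_zero _
  rw [hs]
  rw [Finset.sum_insert (by simp [hxb, hxc, hxd]),
      Finset.sum_insert (by simp [hbc, hbd]),
      Finset.sum_insert (by simp [hcd]), Finset.sum_singleton]
  rw [hval x, hval b, hval c, hval d]
  simp only [eq_self_iff_true, true_or, or_true, if_true]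
  rw [mul_one_div, mul_one_div, mul_one_div, mul_one_div]
  simp only [ENNReal.div_add_div_same]
  congr 1
  ac_rfl

lemma step {n k : ℕ} {a : ℝ≥0∞} (h : k ≤ n) (ha : a ≤ (k : ℝ≥0∞) + 1) :
    a ≤ (n : ℝ≥0∞) + 1 :=
  ha.trans (add_le_add_left (by exact_mod_cast h) 1)

lemma dual_bound (G : SimpleGraph V) [G.LocallyFinite] {x y x1 x2 y1 y2 : V}
    (hdx : G.degree x = 3) (hdy : G.degree y = 3)
    (hAx : ∀ z, G.Adj x z ↔ (z = y ∨ z = x1 ∨ z = x2))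
    (hAy : ∀ z, G.Adj y z ↔ (z = x ∨ z = y1 ∨ z = y2))
    (hxy : x ≠ y) (hxx1 : x ≠ x1) (hxx2 : x ≠ x2) (hyx1 : y ≠ x1) (hyx2 : y ≠ x2)
    (hx12 : x1 ≠ x2)
    (hxy1 : x ≠ y1) (hxy2 : x ≠ y2) (hyy1 : y ≠ y1) (hyy2 : y ≠ y2) (hy12 : y1 ≠ y2)
    (f g : V → ℝ≥0∞)
    (hfeas : ∀ u v, (u = x ∨ u = y ∨ u = x1 ∨ u = x2) → (v = y ∨ v = x ∨ v = y1 ∨ v = y2) →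
      f u + g v ≤ (G.dist u v : ℝ≥0∞) + 1) :
    (f x + f y + f x1 + f x2)/4 + (g y + g x + g y1 + g y2)/4
      ≤ W1 G (muMeasure G (1/4) x) (muMeasure G (1/4) y) + 1 := by
  have hmass : ∑' u, muMeasure G (1/4) x u = 1 := by
    have h := tsum_mu_four G hdx hAx hxy hxx1 hxx2 hyx1 hyx2 hx12 (fun _ => 1)
    simp only [one_mul] at h
    rw [h, show ((1:ℝ≥0∞)+1+1+1) = 4 by norm_num,
      ENNReal.div_self (by norm_num) (by norm_num)]
  have hsupp1 : ∀ u, muMeasure G (1/4) x u ≠ 0 → (u = x ∨ u = y ∨ u = x1 ∨ u = x2) := by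
    intro u hu
    by_contra hc
    push_neg at hc
    rw [mu_eq G hdx hAx hxy hxx1 hxx2 u, if_neg (by tauto)] at hu
    exact hu rfl
  have hsupp2 : ∀ v, muMeasure G (1/4) y v ≠ 0 → (v = y ∨ v = x ∨ v = y1 ∨ v = y2) := by
    intro v hv
    by_contra hc
    push_neg at hc
    rw [mu_eq G hdy hAy hxy.symm hyy1 hyy2 v, if_neg (by tauto)] at hv
    exact hv rfl
  have key := W1_dual_lb G _ _ f g (fun u v hu hv => hfeas u v (hsupp1 u hu) (hsupp2 v hv))
  rw [tsum_mu_four G hdx hAx hxy hxx1 hxx2 hyx1 hyx2 hx12 f,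
      tsum_mu_four G hdy hAy hxy.symm hyy1 hyy2 hxy1 hxy2 hy12 g, hmass] at key
  exact key

end Aux

set_option maxHeartbeats 1000000 in
theorem edge_lies_on_two_pentagons {V : Type*} (G : SimpleGraph V) [G.LocallyFinite]
    (hreg : G.IsRegularOfDegree 3) (hgirth : 5 ≤ G.egirth) (x y : V) (hxy : G.Adj x y)
    (hflat : W1 G (muMeasure G (1/4) x) (muMeasure G (1/4) y) = 1) :
    (∃ P : G.Walk x x, P.IsCycle ∧ P.length = 5 ∧ s(x, y) ∈ P.edges) ∧
      TwoPentagons G x y := by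
  classical
  have hdx : G.degree x = 3 := hreg x
  have hdy : G.degree y = 3 := hreg y
  have hyNx : y ∈ G.neighborFinset x := by rw [SimpleGraph.mem_neighborFinset]; exact hxy
  have hxNy : x ∈ G.neighborFinset y := by rw [SimpleGraph.mem_neighborFinset]; exact hxy.symm
  have hcx : ((G.neighborFinset x).erase y).card = 2 := by
    rw [Finset.card_erase_of_mem hyNx, SimpleGraph.card_neighborFinset_eq_degree, hdx]
  have hcy : ((G.neighborFinset y).erase x).card = 2 := by
    rw [Finset.card_erase_of_mem hxNy, SimpleGraph.card_neighborFinset_eq_degree, hdy]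
  obtain ⟨x1, x2, hx12, hsx⟩ := Finset.card_eq_two.mp hcx
  obtain ⟨y1, y2, hy12, hsy⟩ := Finset.card_eq_two.mp hcy
  have hx1m : x1 ∈ (G.neighborFinset x).erase y := by rw [hsx]; simp
  have hx2m : x2 ∈ (G.neighborFinset x).erase y := by rw [hsx]; simp
  have hy1m : y1 ∈ (G.neighborFinset y).erase x := by rw [hsy]; simp
  have hy2m : y2 ∈ (G.neighborFinset y).erase x := by rw [hsy]; simp
  have hx1y : x1 ≠ y := (Finset.mem_erase.mp hx1m).1
  have hx2y : x2 ≠ y := (Finset.mem_erase.mp hx2m).1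
  have hy1x : y1 ≠ x := (Finset.mem_erase.mp hy1m).1
  have hy2x : y2 ≠ x := (Finset.mem_erase.mp hy2m).1
  have hxx1 : G.Adj x x1 :=
    (SimpleGraph.mem_neighborFinset G x x1).mp (Finset.mem_of_mem_erase hx1m)
  have hxx2 : G.Adj x x2 :=
    (SimpleGraph.mem_neighborFinset G x x2).mp (Finset.mem_of_mem_erase hx2m)
  have hyy1 : G.Adj y y1 :=
    (SimpleGraph.mem_neighborFinset G y y1).mp (Finset.mem_of_mem_erase hy1m)
  have hyy2 : G.Adj y y2 :=
    (SimpleGraph.mem_neighborFinset G y y2).mp (Finset.mem_of_mem_erase hy2m)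
  have hAx : ∀ z, G.Adj x z ↔ (z = y ∨ z = x1 ∨ z = x2) := by
    intro z
    rw [← SimpleGraph.mem_neighborFinset, ← Finset.insert_erase hyNx, hsx]
    simp
  have hAy : ∀ z, G.Adj y z ↔ (z = x ∨ z = y1 ∨ z = y2) := by
    intro z
    rw [← SimpleGraph.mem_neighborFinset, ← Finset.insert_erase hxNy, hsy]
    simp
  have hxny : x ≠ y := hxy.ne
  have hynx : y ≠ x := hxy.ne'
  have hxnx1 : x ≠ x1 := hxx1.ne
  have hxnx2 : x ≠ x2 := hxx2.ne
  have hxny1 : x ≠ y1 := fun h => hy1x h.symm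
  have hxny2 : x ≠ y2 := fun h => hy2x h.symm
  have hyny1 : y ≠ y1 := hyy1.ne
  have hyny2 : y ≠ y2 := hyy2.ne
  have hynx1 : y ≠ x1 := fun h => hx1y h.symm
  have hynx2 : y ≠ x2 := fun h => hx2y h.symm
  have nadj_xy1 : ¬ G.Adj x y1 := fun h => no_triangle hgirth hxy hyy1 h.symm
  have nadj_xy2 : ¬ G.Adj x y2 := fun h => no_triangle hgirth hxy hyy2 h.symm
  have nadj_yx1 : ¬ G.Adj y x1 := fun h => no_triangle hgirth hxy.symm hxx1 h.symm
  have nadj_yx2 : ¬ G.Adj y x2 := fun h => no_triangle hgirth hxy.symm hxx2 h.symm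
  have hx1y1 : x1 ≠ y1 := fun h => nadj_yx1 (by rw [h]; exact hyy1)
  have hx1y2 : x1 ≠ y2 := fun h => nadj_yx1 (by rw [h]; exact hyy2)
  have hx2y1 : x2 ≠ y1 := fun h => nadj_yx2 (by rw [h]; exact hyy1)
  have hx2y2 : x2 ≠ y2 := fun h => nadj_yx2 (by rw [h]; exact hyy2)
  have nadj11 : ¬ G.Adj x1 y1 := fun h =>
    no_square hgirth hxx1 h hyy1.symm hxy.symm hxny1 hx1y
  have nadj12 : ¬ G.Adj x1 y2 := fun h =>
    no_square hgirth hxx1 h hyy2.symm hxy.symm hxny2 hx1y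
  have nadj21 : ¬ G.Adj x2 y1 := fun h =>
    no_square hgirth hxx2 h hyy1.symm hxy.symm hxny1 hx2y
  have nadj22 : ¬ G.Adj x2 y2 := fun h =>
    no_square hgirth hxx2 h hyy2.symm hxy.symm hxny2 hx2y
  have r_x1y : G.Reachable x1 y := (hxx1.symm.reachable).trans hxy.reachable
  have r_x2y : G.Reachable x2 y := (hxx2.symm.reachable).trans hxy.reachable
  have r_xy1 : G.Reachable x y1 := hxy.reachable.trans hyy1.reachable
  have r_xy2 : G.Reachable x y2 := hxy.reachable.trans hyy2.reachable
  have r11 : G.Reachable x1 y1 := r_x1y.trans hyy1.reachable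
  have r12 : G.Reachable x1 y2 := r_x1y.trans hyy2.reachable
  have r21 : G.Reachable x2 y1 := r_x2y.trans hyy1.reachable
  have r22 : G.Reachable x2 y2 := r_x2y.trans hyy2.reachable
  have d_xy : 1 ≤ G.dist x y := (SimpleGraph.dist_eq_one_iff_adj.mpr hxy).ge
  have d_xy1 : 2 ≤ G.dist x y1 := two_le_dist hxny1 nadj_xy1 r_xy1
  have d_xy2 : 2 ≤ G.dist x y2 := two_le_dist hxny2 nadj_xy2 r_xy2
  have d_yy1 : 1 ≤ G.dist y y1 := (SimpleGraph.dist_eq_one_iff_adj.mpr hyy1).ge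
  have d_yy2 : 1 ≤ G.dist y y2 := (SimpleGraph.dist_eq_one_iff_adj.mpr hyy2).ge
  have d_x1y : 2 ≤ G.dist x1 y :=
    two_le_dist hx1y (fun h => nadj_yx1 h.symm) r_x1y
  have d_x2y : 2 ≤ G.dist x2 y :=
    two_le_dist hx2y (fun h => nadj_yx2 h.symm) r_x2y
  have d_x1x : 1 ≤ G.dist x1 x := (SimpleGraph.dist_eq_one_iff_adj.mpr hxx1.symm).ge
  have d_x2x : 1 ≤ G.dist x2 x := (SimpleGraph.dist_eq_one_iff_adj.mpr hxx2.symm).ge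
  have d11 : 2 ≤ G.dist x1 y1 := two_le_dist hx1y1 nadj11 r11
  have d12 : 2 ≤ G.dist x1 y2 := two_le_dist hx1y2 nadj12 r12
  have d21 : 2 ≤ G.dist x2 y1 := two_le_dist hx2y1 nadj21 r21
  have d22 : 2 ≤ G.dist x2 y2 := two_le_dist hx2y2 nadj22 r22
  -- the good case: both pentagons exist
  have good : ∀ ya yb : V, G.Adj y ya → G.Adj y yb → ya ≠ yb → ya ≠ x → yb ≠ x →
      x1 ≠ ya → x1 ≠ yb → x2 ≠ ya → x2 ≠ yb →
      G.dist x1 ya = 2 → G.dist x2 yb = 2 → G.Reachable x1 ya → G.Reachable x2 yb →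
      (∃ P : G.Walk x x, P.IsCycle ∧ P.length = 5 ∧ s(x,y) ∈ P.edges) ∧
        TwoPentagons G x y := by
    intro ya yb hyya hyyb hab hyax hybx h1a h1b h2a h2b hda hdb hra hrb
    obtain ⟨w1, hw1a, hw1b⟩ := exists_mid hda hra
    obtain ⟨w2, hw2a, hw2b⟩ := exists_mid hdb hrb
    have hxw1 : x ≠ w1 := by rintro rfl; exact no_triangle hgirth hxy hyya hw1b.symm
    have hxw2 : x ≠ w2 := by rintro rfl; exact no_triangle hgirth hxy hyyb hw2b.symm
    have hw1y : w1 ≠ y := by rintro rfl; exact no_triangle hgirth hxy.symm hxx1 hw1a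
    have hw2y : w2 ≠ y := by rintro rfl; exact no_triangle hgirth hxy.symm hxx2 hw2a
    obtain ⟨P1, hc1, hl1, he1, hs1⟩ :=
      pentagon hxx1 hw1a hw1b hyya.symm hxy.symm hxw1 hyax.symm h1a hx1y hw1y
    obtain ⟨P2, hc2, hl2, he2, hs2⟩ :=
      pentagon hxx2 hw2a hw2b hyyb.symm hxy.symm hxw2 hybx.symm h2b hx2y hw2y
    have c1 : x1 ≠ w2 := by rintro rfl; exact no_triangle hgirth hxx1 hw2a.symm hxx2.symm
    have c2 : w1 ≠ x2 := by rintro rfl; exact no_triangle hgirth hxx1 hw1a hxx2.symm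
    have c3 : w1 ≠ w2 := by
      rintro rfl; exact no_square hgirth hxx1 hw1a hw2a.symm hxx2.symm hxw1 hx12
    have c4 : w1 ≠ yb := by
      rintro rfl; exact no_square hgirth hxx1 hw1a hyyb.symm hxy.symm hybx.symm hx1y
    have c5 : ya ≠ w2 := by
      rintro rfl; exact no_square hgirth hxx2 hw2a hyya.symm hxy.symm hyax.symm hx2y
    have hx1nx : x1 ≠ x := hxx1.ne'
    have hw1nx : w1 ≠ x := Ne.symm hxw1
    have hyanx2 : ya ≠ x2 := h2a.symm
    have hyany : ya ≠ y := hyya.ne'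
    have hx1ny : x1 ≠ y := hx1y
    refine ⟨⟨P1, hc1, hl1, he1⟩, P1, P2, hc1, hc2, hl1, hl2, he1, he2, ?_⟩
    ext v
    simp only [Set.mem_inter_iff, Set.mem_setOf_eq, hs1, hs2, List.mem_cons,
      List.not_mem_nil, or_false, Set.mem_insert_iff, Set.mem_singleton_iff]
    constructor
    · rintro ⟨(rfl | rfl | rfl | rfl | rfl | rfl), h2⟩
      · exact Or.inl rfl
      · exact absurd h2 (by simp [hx1nx, hx12, c1, h1b, hx1ny])
      · exact absurd h2 (by simp [hw1nx, c2, c3, c4, hw1y])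
      · exact absurd h2 (by simp [hyax, hyanx2, c5, hab, hyany])
      · exact Or.inr rfl
      · exact Or.inl rfl
    · rintro (rfl | rfl)
      · exact ⟨Or.inl rfl, Or.inl rfl⟩
      · exact ⟨Or.inr (Or.inr (Or.inr (Or.inr (Or.inl rfl)))),
          Or.inr (Or.inr (Or.inr (Or.inr (Or.inl rfl))))⟩
  -- the bad cases: 9/4 ≤ W1 + 1, contradiction
  have brow : ∀ a b : V, (∀ z, G.Adj x z ↔ (z = y ∨ z = a ∨ z = b)) → x ≠ a → x ≠ b →
      y ≠ a → y ≠ b → a ≠ b → 1 ≤ G.dist a y → 2 ≤ G.dist a y1 → 2 ≤ G.dist a y2 →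
      1 ≤ G.dist b x → 2 ≤ G.dist b y → 3 ≤ G.dist b y1 → 3 ≤ G.dist b y2 → False := by
    intro a b hA hxa hxb hya hyb hab ha_y ha_y1 ha_y2 hb_x hb_y hb_y1 hb_y2
    set f : V → ℝ≥0∞ := fun u =>
      if u = x then 1 else if u = y then 0 else if u = a then 1 else if u = b then 2
      else 0 with hf
    set g : V → ℝ≥0∞ := fun v =>
      if v = x then 0 else if v = y then 1 else if v = y1 then 2 else if v = y2 then 2
      else 0 with hg
    have fx : f x = 1 := by simp [hf]
    have fy : f y = 0 := by simp [hf, hynx]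
    have fa : f a = 1 := by simp [hf, hxa.symm, hya.symm]
    have fb : f b = 2 := by simp [hf, hxb.symm, hyb.symm, hab.symm]
    have gx : g x = 0 := by simp [hg]
    have gy : g y = 1 := by simp [hg, hynx]
    have gy1 : g y1 = 2 := by simp [hg, hy1x, hyny1.symm]
    have gy2 : g y2 = 2 := by simp [hg, hy2x, hyny2.symm, hy12.symm]
    have hfeas : ∀ u v, (u = x ∨ u = y ∨ u = a ∨ u = b) →
        (v = y ∨ v = x ∨ v = y1 ∨ v = y2) →
        f u + g v ≤ (G.dist u v : ℝ≥0∞) + 1 := by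
      rintro u v (rfl | rfl | rfl | rfl) (rfl | rfl | rfl | rfl)
      · rw [fx, gy]; exact step d_xy (by norm_num)
      · rw [fx, gx]; exact step (Nat.zero_le _) (by norm_num)
      · rw [fx, gy1]; exact step d_xy1 (by norm_num)
      · rw [fx, gy2]; exact step d_xy2 (by norm_num)
      · rw [fy, gy]; exact step (Nat.zero_le _) (by norm_num)
      · rw [fy, gx]; exact step (Nat.zero_le _) (by norm_num)
      · rw [fy, gy1]; exact step d_yy1 (by norm_num)
      · rw [fy, gy2]; exact step d_yy2 (by norm_num)
      · rw [fa, gy]; exact step ha_y (by norm_num)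
      · rw [fa, gx]; exact step (Nat.zero_le _) (by norm_num)
      · rw [fa, gy1]; exact step ha_y1 (by norm_num)
      · rw [fa, gy2]; exact step ha_y2 (by norm_num)
      · rw [fb, gy]; exact step hb_y (by norm_num)
      · rw [fb, gx]; exact step hb_x (by norm_num)
      · rw [fb, gy1]; exact step hb_y1 (by norm_num)
      · rw [fb, gy2]; exact step hb_y2 (by norm_num)
    have hb := dual_bound G hdx hdy hA hAy hxny hxa hxb hya hyb hab hxny1 hxny2
      hyny1 hyny2 hy12 f g hfeas
    rw [fx, fy, fa, fb, gx, gy, gy1, gy2, hflat] at hb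
    rw [show ((1:ℝ≥0∞)+0+1+2)/4 + (1+0+2+2)/4 = 9/4 by
      rw [ENNReal.div_add_div_same]; norm_num] at hb
    have h2 := ENNReal.toReal_mono (by norm_num) hb
    rw [ENNReal.toReal_div] at h2
    norm_num at h2
  have bcol : ∀ a b : V, (∀ z, G.Adj y z ↔ (z = x ∨ z = a ∨ z = b)) → y ≠ a → y ≠ b →
      a ≠ x → b ≠ x → a ≠ b → 1 ≤ G.dist x a → 2 ≤ G.dist x b → 1 ≤ G.dist y b →
      2 ≤ G.dist x1 a → 2 ≤ G.dist x2 a → 3 ≤ G.dist x1 b → 3 ≤ G.dist x2 b → False := by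
    intro a b hA hya hyb hax hbx hab hxa hxb hyb' h1a h2a h1b h2b
    set f : V → ℝ≥0∞ := fun u =>
      if u = x then 1 else if u = y then 0 else if u = x1 then 2 else if u = x2 then 2
      else 0 with hf
    set g : V → ℝ≥0∞ := fun v =>
      if v = x then 0 else if v = y then 1 else if v = a then 1 else if v = b then 2
      else 0 with hg
    have fx : f x = 1 := by simp [hf]
    have fy : f y = 0 := by simp [hf, hynx]
    have f1 : f x1 = 2 := by simp [hf, hxnx1.symm, hynx1.symm]
    have f2 : f x2 = 2 := by
      simp [hf, hxnx2.symm, hynx2.symm, hx12.symm]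
    have gx : g x = 0 := by simp [hg]
    have gy : g y = 1 := by simp [hg, hynx]
    have ga : g a = 1 := by simp [hg, hax, hya.symm]
    have gb : g b = 2 := by simp [hg, hbx, hyb.symm, hab.symm]
    have hfeas : ∀ u v, (u = x ∨ u = y ∨ u = x1 ∨ u = x2) →
        (v = y ∨ v = x ∨ v = a ∨ v = b) →
        f u + g v ≤ (G.dist u v : ℝ≥0∞) + 1 := by
      rintro u v (rfl | rfl | rfl | rfl) (rfl | rfl | rfl | rfl)
      · rw [fx, gy]; exact step d_xy (by norm_num)
      · rw [fx, gx]; exact step (Nat.zero_le _) (by norm_num)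
      · rw [fx, ga]; exact step hxa (by norm_num)
      · rw [fx, gb]; exact step hxb (by norm_num)
      · rw [fy, gy]; exact step (Nat.zero_le _) (by norm_num)
      · rw [fy, gx]; exact step (Nat.zero_le _) (by norm_num)
      · rw [fy, ga]; exact step (Nat.zero_le _) (by norm_num)
      · rw [fy, gb]; exact step hyb' (by norm_num)
      · rw [f1, gy]; exact step d_x1y (by norm_num)
      · rw [f1, gx]; exact step d_x1x (by norm_num)
      · rw [f1, ga]; exact step h1a (by norm_num)
      · rw [f1, gb]; exact step h1b (by norm_num)
      · rw [f2, gy]; exact step d_x2y (by norm_num)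
      · rw [f2, gx]; exact step d_x2x (by norm_num)
      · rw [f2, ga]; exact step h2a (by norm_num)
      · rw [f2, gb]; exact step h2b (by norm_num)
    have hb := dual_bound G hdx hdy hAx hA hxny hxnx1 hxnx2 hynx1 hynx2 hx12
      (fun h => hax h.symm) (fun h => hbx h.symm) hya hyb hab f g hfeas
    rw [fx, fy, f1, f2, gx, gy, ga, gb, hflat] at hb
    rw [show ((1:ℝ≥0∞)+0+2+2)/4 + (1+0+1+2)/4 = 9/4 by
      rw [ENNReal.div_add_div_same]; norm_num] at hb
    have h2 := ENNReal.toReal_mono (by norm_num) hb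
    rw [ENNReal.toReal_div] at h2
    norm_num at h2
  have hAx' : ∀ z, G.Adj x z ↔ (z = y ∨ z = x2 ∨ z = x1) := by
    intro z; rw [hAx z]; tauto
  have hAy' : ∀ z, G.Adj y z ↔ (z = x ∨ z = y2 ∨ z = y1) := by
    intro z; rw [hAy z]; tauto
  have hline : (G.dist x1 y1 = 2 ∧ G.dist x2 y2 = 2) ∨
      (G.dist x1 y2 = 2 ∧ G.dist x2 y1 = 2) ∨
      (3 ≤ G.dist x2 y1 ∧ 3 ≤ G.dist x2 y2) ∨
      (3 ≤ G.dist x1 y1 ∧ 3 ≤ G.dist x1 y2) ∨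
      (3 ≤ G.dist x1 y2 ∧ 3 ≤ G.dist x2 y2) ∨
      (3 ≤ G.dist x1 y1 ∧ 3 ≤ G.dist x2 y1) := by omega
  rcases hline with ⟨h1, h2⟩ | ⟨h1, h2⟩ | ⟨h1, h2⟩ | ⟨h1, h2⟩ | ⟨h1, h2⟩ | ⟨h1, h2⟩
  · exact good y1 y2 hyy1 hyy2 hy12 hy1x hy2x hx1y1 hx1y2 hx2y1 hx2y2 h1 h2 r11 r22
  · exact good y2 y1 hyy2 hyy1 hy12.symm hy2x hy1x hx1y2 hx1y1 hx2y2 hx2y1 h1 h2 r12 r21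
  · exact (brow x1 x2 hAx hxnx1 hxnx2 hynx1 hynx2 hx12
      (by omega) d11 d12 d_x2x d_x2y h1 h2).elim
  · exact (brow x2 x1 hAx' hxnx2 hxnx1 hynx2 hynx1 hx12.symm
      (by omega) d21 d22 d_x1x d_x1y h1 h2).elim
  · exact (bcol y1 y2 hAy hyny1 hyny2 hy1x hy2x hy12
      (by omega) d_xy2 d_yy2 d11 d21 h1 h2).elim
  · exact (bcol y2 y1 hAy' hyny2 hyny1 hy2x hy1x hy12.symm
      (by omega) d_xy1 d_yy1 d12 d22 h1 h2).elim

end RicciFlatCubic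
end

section
/- The Petersen graph is 3-regular with girth 5, and every edge xy of the Petersen graph lies on two 5-cycles whose vertex sets intersect exactly in {x, y}. -/
open scoped ENNReal

namespace RicciFlatCubic

variable {V : Type*}

-- ===== auxiliary machinery for the proof =====

abbrev Pet := {s : Finset (Fin 5) // s.card = 2}

instance : DecidableRel petersen.Adj := fun a b => inferInstanceAs (Decidable (Disjoint a.1 b.1))

private def nFT (v : Pet) : Fintype (petersen.neighborSet v) :=
  inferInstanceAs (Fintype {w // petersen.Adj v w})

private lemma petersen_deg3 : petersen.IsRegularOfDegree 3 := by
  have key : ∀ v : Pet, @Fintype.card _ (nFT v) = 3 := by decide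
  intro v
  rw [← SimpleGraph.card_neighborSet_eq_degree]
  convert key v using 2

set_option maxHeartbeats 1000000 in
private lemma petersen_no3 :
    ∀ a b c : Pet, petersen.Adj a b → petersen.Adj b c → petersen.Adj c a → False := by decide

set_option maxHeartbeats 4000000 in
private lemma petersen_no4 :
    ∀ a b c d : Pet, petersen.Adj a b → petersen.Adj b c → petersen.Adj c d →
      petersen.Adj d a → a = c ∨ b = d := by decide

private def pv (s : Finset (Fin 5)) (h : s.card = 2 := by decide) : Pet := ⟨s, h⟩

private def x₀ : Pet := pv {0,1}
private def y₀ : Pet := pv {2,3}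

private def bP₁ : petersen.Walk x₀ x₀ :=
  .cons (v := y₀) (by decide) <| .cons (v := pv {0,4}) (by decide) <|
  .cons (v := pv {1,2}) (by decide) <| .cons (v := pv {3,4}) (by decide) <| .cons (by decide) .nil

private def bP₂ : petersen.Walk x₀ x₀ :=
  .cons (v := y₀) (by decide) <| .cons (v := pv {1,4}) (by decide) <|
  .cons (v := pv {0,3}) (by decide) <| .cons (v := pv {2,4}) (by decide) <| .cons (by decide) .nil

private lemma bP₁_isCycle : bP₁.IsCycle := ⟨⟨⟨by decide⟩, by simp [bP₁]⟩, by decide⟩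
private lemma bP₂_isCycle : bP₂.IsCycle := ⟨⟨⟨by decide⟩, by simp [bP₂]⟩, by decide⟩

private lemma base_twoPentagons : TwoPentagons petersen x₀ y₀ := by
  refine ⟨bP₁, bP₂, bP₁_isCycle, bP₂_isCycle, by decide, by decide, by decide, by decide, ?_⟩
  have h : ∀ v : Pet, (v ∈ bP₁.support ∧ v ∈ bP₂.support) ↔ (v = x₀ ∨ v = y₀) := by decide
  ext v
  simpa using h v

private def permIso (σ : Equiv.Perm (Fin 5)) : petersen ≃g petersen where
  toEquiv := (Equiv.finsetCongr σ).subtypeEquiv (fun s => by simp)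
  map_rel_iff' := by
    rintro ⟨s, hs⟩ ⟨t, ht⟩
    simpa [petersen, Equiv.finsetCongr_apply] using Finset.disjoint_map _

private lemma twoPentagons_map {V' W : Type*} {G : SimpleGraph V'} {H : SimpleGraph W}
    (f : G ≃g H) {x y : V'} (h : TwoPentagons G x y) : TwoPentagons H (f x) (f y) := by
  obtain ⟨P₁, P₂, c₁, c₂, l₁, l₂, e₁, e₂, hset⟩ := h
  have hinj : Function.Injective (f : V' → W) := f.injective
  refine ⟨P₁.map f.toHom, P₂.map f.toHom, c₁.map hinj, c₂.map hinj,
    by simp [SimpleGraph.Walk.length_map, l₁], by simp [SimpleGraph.Walk.length_map, l₂],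
    ?_, ?_, ?_⟩
  · rw [← Sym2.map_pair_eq, SimpleGraph.Walk.edges_map]
    exact List.mem_map_of_mem e₁
  · rw [← Sym2.map_pair_eq, SimpleGraph.Walk.edges_map]
    exact List.mem_map_of_mem e₂
  · have hsup : ∀ P : G.Walk x x,
        {v | v ∈ (P.map f.toHom).support} = f '' {v | v ∈ P.support} := by
      intro P; ext v; simp [SimpleGraph.Walk.support_map]
    rw [hsup, hsup, ← Set.image_inter hinj, hset, Set.image_insert_eq, Set.image_singleton]

private lemma petersen_egirth : petersen.egirth = 5 := by
  apply le_antisymm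
  · have h1 : petersen.egirth ≤ (bP₁.length : ℕ∞) := by
      apply iInf_le_of_le x₀
      apply iInf_le_of_le bP₁
      exact iInf_le _ bP₁_isCycle
    simpa [show bP₁.length = 5 from rfl] using h1
  · rw [SimpleGraph.le_egirth]
    intro a w hw
    have h3 : 3 ≤ w.length := hw.three_le_length
    by_contra hlt
    have hle : w.length ≤ 4 := by
      by_contra h'
      exact hlt (by exact_mod_cast by omega : (5:ℕ∞) ≤ (w.length : ℕ∞))
    clear hlt
    cases w with
    | nil => simp at h3
    | cons hab p =>
      cases p with
      | nil => simp at h3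
      | cons hbc q =>
        cases q with
        | nil => simp at h3
        | cons hcd r =>
          cases r with
          | nil => exact petersen_no3 _ _ _ hab hbc hcd
          | cons hde s =>
            cases s with
            | nil =>
              have hnd := hw.support_nodup
              simp [SimpleGraph.Walk.support_cons] at hnd
              rcases petersen_no4 _ _ _ _ hab hbc hcd hde with h | h <;> tauto
            | cons hef t =>
              simp only [SimpleGraph.Walk.length_cons] at hle
              omega

private lemma petersen_edge_twoPentagons {x y : Pet} (hxy : petersen.Adj x y) :
    TwoPentagons petersen x y := by
  obtain ⟨p, q, hpq, ha⟩ := Finset.card_eq_two.mp x.2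
  obtain ⟨r, s, hrs, hb⟩ := Finset.card_eq_two.mp y.2
  have hdisj : Disjoint x.1 y.1 := hxy
  rw [ha, hb, Finset.disjoint_left] at hdisj
  have hpr : p ≠ r := fun h => hdisj (a := p) (by simp) (by simp [h])
  have hps : p ≠ s := fun h => hdisj (a := p) (by simp) (by simp [h])
  have hqr : q ≠ r := fun h => hdisj (a := q) (by simp) (by simp [h])
  have hqs : q ≠ s := fun h => hdisj (a := q) (by simp) (by simp [h])
  obtain ⟨e, he⟩ : ∃ e : Fin 5, e ∉ ({p, q, r, s} : Finset (Fin 5)) := by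
    by_contra hcon
    push_neg at hcon
    have h1 : (Finset.univ : Finset (Fin 5)).card ≤ ({p, q, r, s} : Finset (Fin 5)).card :=
      Finset.card_le_card fun z _ => hcon z
    have h2 : ({p, q, r, s} : Finset (Fin 5)).card ≤ 4 := by
      calc ({p, q, r, s} : Finset (Fin 5)).card ≤ ({q, r, s} : Finset (Fin 5)).card + 1 :=
            Finset.card_insert_le _ _
        _ ≤ (({r, s} : Finset (Fin 5)).card + 1) + 1 := by
            exact Nat.add_le_add_right (Finset.card_insert_le _ _) 1
        _ ≤ ((({s} : Finset (Fin 5)).card + 1) + 1) + 1 := by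
            exact Nat.add_le_add_right (Nat.add_le_add_right (Finset.card_insert_le _ _) 1) 1
        _ ≤ 4 := by simp
    simp [Finset.card_univ] at h1
    omega
  simp only [Finset.mem_insert, Finset.mem_singleton, not_or] at he
  obtain ⟨hep, heq, her, hes⟩ := he
  have hinj : Function.Injective ![p, q, r, s, e] := by
    intro i j hij
    fin_cases i <;> fin_cases j <;> simp_all
  let σ : Equiv.Perm (Fin 5) :=
    Equiv.ofBijective _ ((Fintype.bijective_iff_injective_and_card _).mpr ⟨hinj, rfl⟩)
  have hσ : ∀ i : Fin 5, σ i = ![p, q, r, s, e] i := fun i => rfl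
  let f₀ : petersen ≃g petersen := permIso σ
  have hx : f₀ x₀ = x := by
    apply Subtype.ext
    rw [ha]
    show Finset.map σ.toEmbedding {0, 1} = {p, q}
    rw [Finset.map_insert, Finset.map_singleton]
    simp [hσ]
  have hy : f₀ y₀ = y := by
    apply Subtype.ext
    rw [hb]
    show Finset.map σ.toEmbedding {2, 3} = {r, s}
    rw [Finset.map_insert, Finset.map_singleton]
    simp [hσ]
  have := twoPentagons_map f₀ base_twoPentagons
  rwa [hx, hy] at this

theorem petersen_twoPentagons :
    petersen.IsRegularOfDegree 3 ∧ petersen.egirth = 5 ∧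
      ∀ x y, petersen.Adj x y → TwoPentagons petersen x y := by
  exact ⟨petersen_deg3, petersen_egirth, fun x y h => petersen_edge_twoPentagons h⟩

end RicciFlatCubic
end
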